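/- Let m ≡ 2 (mod 6) with m ≥ 8 and n = 2^m − 1. For i ∈ {0,1,2}, define T_i = { 1 ≤ j ≤ n−1 : w₂(j) ≡ i (mod 3) }. Then |T_0| = |T_2| = (2^m − 4)/3 and |T_1| = (2^m + 2)/3. -/
import Mathlib

def w2 (x : ℕ) : ℕ := (Nat.digits 2 x).sum

lemma w2_zero : w2 0 = 0 := by simp [w2]

lemma w2_rec (x : ℕ) (hx : x ≠ 0) : w2 x = x % 2 + w2 (x / 2) := by
  unfold w2
  rw [Nat.digits_def' (by norm_num : 1 < 2) (Nat.pos_of_ne_zero hx)]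
  simp

lemma w2_pow_add : ∀ m k : ℕ, k < 2 ^ m → w2 (2 ^ m + k) = w2 k + 1 := by
  intro m
  induction m with
  | zero =>
    intro k hk
    interval_cases k
    simp [w2_rec 1 one_ne_zero, w2_zero]
  | succ m ih =>
    intro k hk
    have h2 : 2 ^ (m + 1) = 2 ^ m + 2 ^ m := by ring
    have hx : 2 ^ (m + 1) + k ≠ 0 := by positivity
    rw [w2_rec _ hx]
    have hmod : (2 ^ (m + 1) + k) % 2 = k % 2 := by omega
    have hdiv : (2 ^ (m + 1) + k) / 2 = 2 ^ m + k / 2 := by omega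
    rw [hmod, hdiv, ih (k / 2) (by omega)]
    by_cases hk0 : k = 0
    · subst hk0; simp [w2_zero]
    · rw [w2_rec k hk0]; ring

lemma w2_pow_sub_one : ∀ m : ℕ, w2 (2 ^ m - 1) = m := by
  intro m
  induction m with
  | zero => simp [w2_zero]
  | succ m ih =>
    have h2 : 2 ^ (m + 1) = 2 ^ m + 2 ^ m := by ring
    have h1 : 1 ≤ 2 ^ m := Nat.one_le_two_pow
    have he : 2 ^ (m + 1) - 1 = 2 ^ m + (2 ^ m - 1) := by omega
    rw [he, w2_pow_add m (2 ^ m - 1) (by omega), ih]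

def Fc (m i : ℕ) : ℕ :=
  ((Finset.range (2 ^ m)).filter (fun j => w2 j % 3 = i)).card

lemma Fc_succ (m i : ℕ) (hi : i < 3) :
    Fc (m + 1) i = Fc m i + Fc m ((i + 2) % 3) := by
  unfold Fc
  have h2 : 2 ^ (m + 1) = 2 ^ m + 2 ^ m := by ring
  have hset : (Finset.range (2 ^ (m + 1))).filter (fun j => w2 j % 3 = i)
      = (Finset.range (2 ^ m)).filter (fun j => w2 j % 3 = i)
        ∪ ((Finset.range (2 ^ m)).filter (fun j => w2 j % 3 = (i + 2) % 3)).image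
            (fun k => 2 ^ m + k) := by
    ext j
    simp only [Finset.mem_filter, Finset.mem_union, Finset.mem_image, Finset.mem_range]
    constructor
    · rintro ⟨hj, hw⟩
      by_cases h : j < 2 ^ m
      · exact Or.inl ⟨h, hw⟩
      · refine Or.inr ⟨j - 2 ^ m, ⟨⟨by omega, ?_⟩, by omega⟩⟩
        have hB : w2 (2 ^ m + (j - 2 ^ m)) = w2 (j - 2 ^ m) + 1 :=
          w2_pow_add m _ (by omega)
        rw [show 2 ^ m + (j - 2 ^ m) = j from by omega] at hB
        omega
    · rintro (⟨hj, hw⟩ | ⟨k, ⟨hk, hw⟩, rfl⟩)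
      · exact ⟨by omega, hw⟩
      · refine ⟨by omega, ?_⟩
        rw [w2_pow_add m k hk]
        omega
  rw [hset, Finset.card_union_of_disjoint, Finset.card_image_of_injective _
    (fun a b hab => by omega)]
  rw [Finset.disjoint_left]
  intro a ha hb
  simp only [Finset.mem_filter, Finset.mem_image, Finset.mem_range] at ha hb
  obtain ⟨k, ⟨hk1, _⟩, hka⟩ := hb
  have := ha.1
  omega

def E : ℕ → ℕ → ℤ
  | 0, 0 => 2 | 0, 1 => -1 | 0, 2 => -1
  | 1, 0 => 1 | 1, 1 => 1 | 1, 2 => -2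
  | 2, 0 => -1 | 2, 1 => 2 | 2, 2 => -1
  | 3, 0 => -2 | 3, 1 => 1 | 3, 2 => 1
  | 4, 0 => -1 | 4, 1 => -1 | 4, 2 => 2
  | 5, 0 => 1 | 5, 1 => -2 | 5, 2 => 1
  | _, _ => 0

set_option maxHeartbeats 1000000 in
lemma Fc_formula : ∀ m : ℕ,
    3 * (Fc m 0 : ℤ) = 2 ^ m + E (m % 6) 0 ∧
    3 * (Fc m 1 : ℤ) = 2 ^ m + E (m % 6) 1 ∧
    3 * (Fc m 2 : ℤ) = 2 ^ m + E (m % 6) 2 := by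
  intro m
  induction m with
  | zero =>
    have hbase : ∀ i, Fc 0 i = if 0 % 3 = i then 1 else 0 := by
      intro i
      unfold Fc
      rw [pow_zero, Finset.range_one, Finset.filter_singleton, w2_zero]
      split <;> simp
    rw [hbase, hbase, hbase]
    norm_num [E]
  | succ m ih =>
    obtain ⟨ih0, ih1, ih2⟩ := ih
    have hs0 := Fc_succ m 0 (by norm_num)
    have hs1 := Fc_succ m 1 (by norm_num)
    have hs2 := Fc_succ m 2 (by norm_num)
    norm_num at hs0 hs1 hs2
    rw [hs0, hs1, hs2]
    have h6 : (m + 1) % 6 = (m % 6 + 1) % 6 := by omega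
    rw [h6]
    have hp : (2 : ℤ) ^ (m + 1) = 2 ^ m + 2 ^ m := by ring
    have hr : m % 6 = 0 ∨ m % 6 = 1 ∨ m % 6 = 2 ∨ m % 6 = 3 ∨ m % 6 = 4 ∨ m % 6 = 5 := by
      omega
    rcases hr with h | h | h | h | h | h <;>
      rw [h] at ih0 ih1 ih2 <;> rw [h] <;>
      norm_num [E] at ih0 ih1 ih2 ⊢ <;>
      refine ⟨by linarith, by linarith, by linarith⟩

theorem stmt14 (m : ℕ) (hm : m % 6 = 2) (hm8 : 8 ≤ m) (n : ℕ) (hn : n = 2 ^ m - 1) :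
    let T : ℕ → Finset ℕ := fun i => (Finset.Icc 1 (n - 1)).filter (fun j => w2 j % 3 = i)
    (T 0).card = (2 ^ m - 4) / 3 ∧ (T 1).card = (2 ^ m + 2) / 3 ∧
    (T 2).card = (2 ^ m - 4) / 3 := by
  intro T
  have hK : 4 ≤ 2 ^ m := by
    calc (4 : ℕ) = 2 ^ 2 := rfl
    _ ≤ 2 ^ m := Nat.pow_le_pow_right (by norm_num) (by omega)
  have hn1 : n - 1 = 2 ^ m - 2 := by omega
  have hsplit : Finset.range (2 ^ m)
      = insert 0 (insert (2 ^ m - 1) (Finset.Icc 1 (2 ^ m - 2))) := by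
    ext j
    simp only [Finset.mem_range, Finset.mem_insert, Finset.mem_Icc]
    omega
  have hw0 : w2 0 = 0 := w2_zero
  have hwlast : w2 (2 ^ m - 1) % 3 = 2 := by
    rw [w2_pow_sub_one]; omega
  have key : ∀ i, Fc m i
      = (if (0 : ℕ) % 3 = i then 1 else 0) + (if w2 (2 ^ m - 1) % 3 = i then 1 else 0)
        + ((Finset.Icc 1 (2 ^ m - 2)).filter (fun j => w2 j % 3 = i)).card := by
    intro i
    unfold Fc
    rw [hsplit, Finset.filter_insert, Finset.filter_insert]
    simp only [hw0]
    set S := (Finset.Icc 1 (2 ^ m - 2)).filter (fun j => w2 j % 3 = i) with hS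
    have h0S : (0 : ℕ) ∉ S := by
      rw [hS]; simp only [Finset.mem_filter, Finset.mem_Icc]
      rintro ⟨⟨h1, _⟩, _⟩; omega
    have hlS : (2 ^ m - 1) ∉ S := by
      rw [hS]; simp only [Finset.mem_filter, Finset.mem_Icc]
      rintro ⟨⟨_, h2⟩, _⟩; omega
    by_cases hl : w2 (2 ^ m - 1) % 3 = i
    · simp only [if_pos hl]
      by_cases h0 : (0 : ℕ) % 3 = i
      · simp only [if_pos h0]
        rw [Finset.card_insert_of_notMem (by
          simp only [Finset.mem_insert]
          push_neg
          exact ⟨by omega, h0S⟩), Finset.card_insert_of_notMem hlS]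
        omega
      · simp only [if_neg h0]
        rw [Finset.card_insert_of_notMem hlS]; omega
    · simp only [if_neg hl]
      by_cases h0 : (0 : ℕ) % 3 = i
      · simp only [if_pos h0]
        rw [Finset.card_insert_of_notMem h0S]; omega
      · simp only [if_neg h0]
        omega
  have hT : ∀ i, (T i).card
      = ((Finset.Icc 1 (2 ^ m - 2)).filter (fun j => w2 j % 3 = i)).card := by
    intro i
    simp only [T, hn1]
  obtain ⟨h0, h1, h2⟩ := Fc_formula m
  rw [hm] at h0 h1 h2
  norm_num [E] at h0 h1 h2
  have k0 := key 0
  have k1 := key 1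
  have k2 := key 2
  rw [hwlast, ← hT 0] at k0
  rw [hwlast, ← hT 1] at k1
  rw [hwlast, ← hT 2] at k2
  norm_num at k0 k1 k2
  rw [k0] at h0
  rw [k1] at h1
  rw [k2] at h2
  push_cast at h0 h1 h2
  have hKz : (4 : ℤ) ≤ 2 ^ m := by exact_mod_cast hK
  have e0 : 3 * (T 0).card = 2 ^ m - 4 := by
    have h : 3 * ((T 0).card : ℤ) = ((2 ^ m : ℕ) : ℤ) - 4 := by push_cast; linarith
    omega
  have e1 : 3 * (T 1).card = 2 ^ m + 2 := by
    have h : 3 * ((T 1).card : ℤ) = ((2 ^ m : ℕ) : ℤ) + 2 := by push_cast; linarith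
    omega
  have e2 : 3 * (T 2).card = 2 ^ m - 4 := by
    have h : 3 * ((T 2).card : ℤ) = ((2 ^ m : ℕ) : ℤ) - 4 := by push_cast; linarith
    omega
  clear h0 h1 h2 k0 k1 k2 hsplit key hT hwlast hw0 hn1 hn
  generalize hg : (2 : ℕ) ^ m = K at e0 e1 e2 hK ⊢
  exact ⟨by omega, by omega, by omega⟩
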